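/- Let H be a real symmetric positive definite d×d matrix with all eigenvalues at least μ > 0, let d ≥ 2, 0 < c ≤ 1, α > 0. Define V_other = (d²/((d−1)² c² α² μ²)) · ((2/μ) H − I)^{-1} and V_our = (d/((d−1)² α²)) · H^{-2}. Then V_other − V_our is positive semi-definite. -/

import Mathlib

set_option maxHeartbeats 1000000 in
/-- With `H` real symmetric positive definite with eigenvalues at least `μ > 0`,
`d ≥ 2`, `0 < c ≤ 1`, `α > 0`,
`V_other = (d²/((d−1)²c²α²μ²)) ((2/μ)H − I)⁻¹` and `V_our = (d/((d−1)²α²)) H⁻²`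
satisfy `V_other − V_our ⪰ 0`. -/
theorem stmt8 (d : ℕ) (hd : 2 ≤ d) (μ c α : ℝ) (hμ : 0 < μ)
    (hc : 0 < c) (hc1 : c ≤ 1) (hα : 0 < α)
    (H : Matrix (Fin d) (Fin d) ℝ) (hH : H.PosDef)
    (heig : ∀ i, μ ≤ hH.1.eigenvalues i) :
    (((d : ℝ) ^ 2 / (((d : ℝ) - 1) ^ 2 * c ^ 2 * α ^ 2 * μ ^ 2)) •
        ((2 / μ) • H - 1)⁻¹
      - ((d : ℝ) / (((d : ℝ) - 1) ^ 2 * α ^ 2)) • (H⁻¹ * H⁻¹)).PosSemidef := by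
  have hd2 : (2:ℝ) ≤ (d:ℝ) := by exact_mod_cast hd
  set lam := hH.1.eigenvalues with hlam
  set U : Matrix (Fin d) (Fin d) ℝ := (hH.1.eigenvectorUnitary : Matrix (Fin d) (Fin d) ℝ) with hU
  have hUU : U * star U = 1 := (Matrix.mem_unitaryGroup_iff).mp hH.1.eigenvectorUnitary.2
  have hUU' : star U * U = 1 := (Matrix.mem_unitaryGroup_iff').mp hH.1.eigenvectorUnitary.2
  have hspec : H = U * Matrix.diagonal lam * star U := by
    have := hH.1.spectral_theorem
    simpa using this
  have key : ∀ v w : Fin d → ℝ,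
      (U * Matrix.diagonal v * star U) * (U * Matrix.diagonal w * star U)
        = U * Matrix.diagonal (fun i => v i * w i) * star U := by
    intro v w
    have h : Matrix.diagonal v * Matrix.diagonal w = Matrix.diagonal (fun i => v i * w i) := by
      rw [Matrix.diagonal_mul_diagonal]
    calc (U * Matrix.diagonal v * star U) * (U * Matrix.diagonal w * star U)
        = U * (Matrix.diagonal v * (star U * U) * Matrix.diagonal w) * star U := by
          simp only [Matrix.mul_assoc]
      _ = U * Matrix.diagonal (fun i => v i * w i) * star U := by
          rw [hUU', Matrix.mul_one, h]
  have hlampos : ∀ i, 0 < lam i := fun i => lt_of_lt_of_le hμ (heig i)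
  have hspos : ∀ i, (1:ℝ) ≤ 2 / μ * lam i - 1 := by
    intro i
    have h1 : (2:ℝ) ≤ 2 / μ * lam i := by
      rw [div_mul_eq_mul_div, le_div_iff₀ hμ]
      nlinarith [heig i]
    linarith
  have h1' : (1 : Matrix (Fin d) (Fin d) ℝ) = U * Matrix.diagonal (fun _ => (1:ℝ)) * star U := by
    rw [Matrix.diagonal_one, Matrix.mul_one, hUU]
  have hA : (2 / μ) • H - 1 = U * Matrix.diagonal (fun i => 2 / μ * lam i - 1) * star U := by
    have hdec : (Matrix.diagonal fun i => 2 / μ * lam i - 1)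
        = (2/μ) • Matrix.diagonal lam - Matrix.diagonal (fun _ => (1:ℝ)) := by
      rw [← Matrix.diagonal_smul, ← Matrix.diagonal_sub]
      rfl
    rw [hspec]
    conv_lhs => rw [h1']
    simp only [hdec, Matrix.mul_sub, Matrix.sub_mul, Matrix.mul_smul, Matrix.smul_mul]
  have hAinv : ((2 / μ) • H - 1)⁻¹
      = U * Matrix.diagonal (fun i => (2 / μ * lam i - 1)⁻¹) * star U := by
    apply Matrix.inv_eq_right_inv
    rw [hA, key]
    have h : (fun i => (2 / μ * lam i - 1) * (2 / μ * lam i - 1)⁻¹) = fun _ => (1:ℝ) := by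
      funext i
      exact mul_inv_cancel₀ (by linarith [hspos i])
    rw [h, Matrix.diagonal_one, Matrix.mul_one, hUU]
  have hHinv : H⁻¹ = U * Matrix.diagonal (fun i => (lam i)⁻¹) * star U := by
    apply Matrix.inv_eq_right_inv
    rw [hspec, key]
    have h : (fun i => lam i * (lam i)⁻¹) = fun _ => (1:ℝ) := by
      funext i
      exact mul_inv_cancel₀ (hlampos i).ne'
    rw [h, Matrix.diagonal_one, Matrix.mul_one, hUU]
  set a : ℝ := (d : ℝ) ^ 2 / (((d : ℝ) - 1) ^ 2 * c ^ 2 * α ^ 2 * μ ^ 2) with ha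
  set b : ℝ := (d : ℝ) / (((d : ℝ) - 1) ^ 2 * α ^ 2) with hb
  have hmain : a • ((2 / μ) • H - 1)⁻¹ - b • (H⁻¹ * H⁻¹)
      = U * Matrix.diagonal
          (fun i => a * (2 / μ * lam i - 1)⁻¹ - b * ((lam i)⁻¹ * (lam i)⁻¹)) * star U := by
    have hdec : (Matrix.diagonal
          fun i => a * (2 / μ * lam i - 1)⁻¹ - b * ((lam i)⁻¹ * (lam i)⁻¹))
        = a • Matrix.diagonal (fun i => (2 / μ * lam i - 1)⁻¹)
          - b • Matrix.diagonal (fun i => (lam i)⁻¹ * (lam i)⁻¹) := by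
      rw [← Matrix.diagonal_smul, ← Matrix.diagonal_smul, ← Matrix.diagonal_sub]
      rfl
    rw [hAinv, hHinv, key]
    simp only [hdec, Matrix.mul_sub, Matrix.sub_mul, Matrix.mul_smul, Matrix.smul_mul]
  rw [hmain]
  have hg : ∀ i, 0 ≤ a * (2 / μ * lam i - 1)⁻¹ - b * ((lam i)⁻¹ * (lam i)⁻¹) := by
    intro i
    set t := lam i with htdef
    have htμ : μ ≤ t := heig i
    have ht : 0 < t := hlampos i
    have hs0 : (0:ℝ) < 2 / μ * t - 1 := by linarith [hspos i]
    have hd1 : (1:ℝ) ≤ (d:ℝ) - 1 := by linarith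
    have hc2 : c ^ 2 ≤ 1 := by nlinarith
    have hK : (0:ℝ) < ((d:ℝ) - 1) ^ 2 * α ^ 2 := by positivity
    have hK2 : (0:ℝ) < ((d:ℝ) - 1) ^ 2 * c ^ 2 * α ^ 2 * μ ^ 2 := by positivity
    rw [sub_nonneg, ha, hb]
    have e1 : ((d:ℝ) / (((d:ℝ) - 1) ^ 2 * α ^ 2)) * (t⁻¹ * t⁻¹)
        = (d:ℝ) / ((((d:ℝ) - 1) ^ 2 * α ^ 2) * (t * t)) := by
      field_simp
    have e2 : ((d:ℝ) ^ 2 / (((d:ℝ) - 1) ^ 2 * c ^ 2 * α ^ 2 * μ ^ 2)) * (2 / μ * t - 1)⁻¹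
        = (d:ℝ) ^ 2 / ((((d:ℝ) - 1) ^ 2 * c ^ 2 * α ^ 2 * μ ^ 2) * (2 / μ * t - 1)) := by
      rw [mul_comm ((d:ℝ) ^ 2 / (((d:ℝ) - 1) ^ 2 * c ^ 2 * α ^ 2 * μ ^ 2)) _,
        inv_mul_eq_div, div_div]
    have p1 : (0:ℝ) < (((d:ℝ) - 1) ^ 2 * α ^ 2) * (t * t) := by positivity
    have p2 : (0:ℝ) < (((d:ℝ) - 1) ^ 2 * c ^ 2 * α ^ 2 * μ ^ 2) * (2 / μ * t - 1) := by
      positivity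
    rw [e1, e2, div_le_div_iff₀ p1 p2]
    have hred : (((d:ℝ) - 1) ^ 2 * c ^ 2 * α ^ 2 * μ ^ 2) * (2 / μ * t - 1)
        = ((d:ℝ) - 1) ^ 2 * c ^ 2 * α ^ 2 * μ * (2 * t - μ) := by
      field_simp
    have core : (d:ℝ) * (c ^ 2 * (μ * (2 * t - μ))) ≤ (d:ℝ) ^ 2 * t ^ 2 := by
      have h2t : (0:ℝ) < 2 * t - μ := by linarith
      have hdnn : (0:ℝ) ≤ (d:ℝ) := by linarith
      have hb1 : c ^ 2 * (μ * (2 * t - μ)) ≤ μ * (2 * t - μ) := by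
        have := mul_le_mul_of_nonneg_right hc2 (le_of_lt (mul_pos hμ h2t))
        linarith
      have hb2 : μ * (2 * t - μ) ≤ (d:ℝ) * t ^ 2 := by
        nlinarith [sq_nonneg (t - μ), mul_nonneg (by linarith : (0:ℝ) ≤ (d:ℝ) - 1) (sq_nonneg t)]
      calc (d:ℝ) * (c ^ 2 * (μ * (2 * t - μ))) ≤ (d:ℝ) * (μ * (2 * t - μ)) :=
            mul_le_mul_of_nonneg_left hb1 hdnn
        _ ≤ (d:ℝ) * ((d:ℝ) * t ^ 2) := mul_le_mul_of_nonneg_left hb2 hdnn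
        _ = (d:ℝ) ^ 2 * t ^ 2 := by ring
    calc (d:ℝ) * ((((d:ℝ) - 1) ^ 2 * c ^ 2 * α ^ 2 * μ ^ 2) * (2 / μ * t - 1))
        = (((d:ℝ) - 1) ^ 2 * α ^ 2) * ((d:ℝ) * (c ^ 2 * (μ * (2 * t - μ)))) := by
          rw [hred]; ring
      _ ≤ (((d:ℝ) - 1) ^ 2 * α ^ 2) * ((d:ℝ) ^ 2 * t ^ 2) :=
          mul_le_mul_of_nonneg_left core (le_of_lt hK)
      _ = (d:ℝ) ^ 2 * ((((d:ℝ) - 1) ^ 2 * α ^ 2) * (t * t)) := by ring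
  have hps := (Matrix.posSemidef_diagonal_iff.mpr hg).mul_mul_conjTranspose_same U
  simpa [Matrix.star_eq_conjTranspose] using hps
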